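/- Every statistically convergent sequence in an S-metric space (X,S) has a convergent subsequence (converging to the statistical limit). -/
import Mathlib


open Filter

open scoped Classical in
/-- Natural density: `A ⊆ ℕ` has density `d` if `|{k ∈ A : k < n}|/n → d`. -/
def HasDensity (A : Set ℕ) (d : ℝ) : Prop :=
  Filter.Tendsto
    (fun n : ℕ => (((Finset.range n).filter (fun k => k ∈ A)).card : ℝ) / n)
    Filter.atTop (nhds d)

/-- `S` is an S-metric on `X`. -/
structure IsSMetric {X : Type*} (S : X → X → X → ℝ) : Prop where
  nonneg : ∀ x y z, 0 ≤ S x y z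
  eq_zero_iff : ∀ x y z, S x y z = 0 ↔ x = y ∧ y = z
  triangle : ∀ x y z a, S x y z ≤ S x x a + S y y a + S z z a

/-- Ordinary convergence of a sequence in an S-metric space. -/
def SConvergesTo {X : Type*} (S : X → X → X → ℝ) (x : ℕ → X) (l : X) : Prop :=
  ∀ ε : ℝ, 0 < ε → ∃ N : ℕ, ∀ n ≥ N, S (x n) (x n) l < ε

/-- Statistical convergence of a sequence in an S-metric space. -/
def SStatConvergesTo {X : Type*} (S : X → X → X → ℝ) (x : ℕ → X) (l : X) : Prop :=
  ∀ ε : ℝ, 0 < ε → HasDensity {n : ℕ | ε ≤ S (x n) (x n) l} 0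

/-- Cauchy sequence in an S-metric space. -/
def SCauchy {X : Type*} (S : X → X → X → ℝ) (x : ℕ → X) : Prop :=
  ∀ ε : ℝ, 0 < ε → ∃ k : ℕ, ∀ n ≥ k, ∀ m ≥ k, S (x n) (x n) (x m) < ε

/-- Statistically Cauchy sequence in an S-metric space. -/
def SStatCauchy {X : Type*} (S : X → X → X → ℝ) (x : ℕ → X) : Prop :=
  ∀ ε : ℝ, 0 < ε → ∃ N : ℕ, HasDensity {n : ℕ | ε ≤ S (x n) (x n) (x N)} 0

/-- Statistically bounded sequence in an S-metric space. -/
def SStatBounded {X : Type*} (S : X → X → X → ℝ) (x : ℕ → X) : Prop :=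
  ∀ u : X, ∃ B : ℝ, 0 < B ∧ HasDensity {n : ℕ | B ≤ S (x n) (x n) u} 0

/-- Rough convergence with roughness degree `r`. -/
def SRoughConvergesTo {X : Type*} (S : X → X → X → ℝ) (r : ℝ) (x : ℕ → X) (p : X) : Prop :=
  ∀ ε : ℝ, 0 < ε → ∃ k : ℕ, ∀ n ≥ k, S (x n) (x n) p < r + ε

/-- Rough statistical convergence with roughness degree `r`. -/
def SRoughStatConvergesTo {X : Type*} (S : X → X → X → ℝ) (r : ℝ) (x : ℕ → X) (p : X) : Prop :=
  ∀ ε : ℝ, 0 < ε → HasDensity {n : ℕ | r + ε ≤ S (x n) (x n) p} 0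

/-- The rough statistical limit set `st-LIM^r x_n`. -/
def stLIM {X : Type*} (S : X → X → X → ℝ) (r : ℝ) (x : ℕ → X) : Set X :=
  {p : X | SRoughStatConvergesTo S r x p}

/-- The topology on `X` generated by the open balls of the S-metric. -/
def sBallTopology {X : Type*} (S : X → X → X → ℝ) : TopologicalSpace X :=
  TopologicalSpace.generateFrom
    {B : Set X | ∃ c : X, ∃ ε : ℝ, 0 < ε ∧ B = {y : X | S y y c < ε}}


open scoped Classical in
lemma density_zero_compl_infinite (A : Set ℕ) (hA : HasDensity A 0) : Aᶜ.Infinite := by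
  by_contra hinf
  rw [Set.not_infinite] at hinf
  have hfin := hinf
  obtain ⟨M, hM⟩ := hfin.bddAbove
  -- all k > M are in A
  have hmem : ∀ k, M < k → k ∈ A := by
    intro k hk
    by_contra hkA
    exact absurd (hM hkA) (not_le.mpr hk)
  have hcard : ∀ n : ℕ, n - (M+1) ≤ ((Finset.range n).filter (fun k => k ∈ A)).card := by
    intro n
    have hsub : Finset.Ico (M+1) n ⊆ (Finset.range n).filter (fun k => k ∈ A) := by
      intro k hk
      rw [Finset.mem_Ico] at hk
      rw [Finset.mem_filter, Finset.mem_range]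
      exact ⟨hk.2, hmem k (Nat.lt_of_succ_le hk.1)⟩
    have := Finset.card_le_card hsub
    rwa [Nat.card_Ico] at this
  have hev : ∀ᶠ n : ℕ in atTop,
      (((Finset.range n).filter (fun k => k ∈ A)).card : ℝ) / n < 1/2 :=
    hA.eventually_lt_const (by norm_num)
  obtain ⟨n, hn1, hn2⟩ := ((eventually_ge_atTop (2*(M+1)+1)).and hev).exists
  have hnpos : 0 < n := lt_of_lt_of_le (Nat.succ_pos _) hn1
  have h1 : (n : ℝ) - (M+1) ≤ ((Finset.range n).filter (fun k => k ∈ A)).card := by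
    have := hcard n
    have hMn : M + 1 ≤ n := le_trans (by omega) hn1
    calc (n : ℝ) - (M+1) = ((n - (M+1) : ℕ) : ℝ) := by
          rw [Nat.cast_sub hMn]; push_cast; ring
      _ ≤ _ := by exact_mod_cast this
  have h2 : (M + 1 : ℝ) ≤ (n : ℝ) / 2 := by
    rw [le_div_iff₀ (by norm_num)]
    have : (2*(M+1) : ℕ) ≤ n := by omega
    have h' : ((2*(M+1):ℕ):ℝ) ≤ (n:ℝ) := Nat.cast_le.mpr this
    push_cast at h'
    linarith
  have h3 : (n : ℝ)/2 ≤ ((Finset.range n).filter (fun k => k ∈ A)).card := by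
    linarith
  have hnR : (0:ℝ) < n := by exact_mod_cast hnpos
  have : (1:ℝ)/2 ≤ (((Finset.range n).filter (fun k => k ∈ A)).card : ℝ) / n := by
    rw [le_div_iff₀ hnR]
    linarith
  linarith

theorem stmt_5 {X : Type*} [Nonempty X] (S : X → X → X → ℝ) (hS : IsSMetric S)
    (x : ℕ → X) (l : X) (h : SStatConvergesTo S x l) :
    ∃ n : ℕ → ℕ, StrictMono n ∧ SConvergesTo S (fun k => x (n k)) l := by
  have key : ∀ k m : ℕ, ∃ j, m < j ∧ S (x j) (x j) l < 1/(k+1) := by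
    intro k m
    have hpos : (0:ℝ) < 1/(k+1) := by positivity
    have hinf : ({n : ℕ | (1:ℝ)/(k+1) ≤ S (x n) (x n) l})ᶜ.Infinite :=
      density_zero_compl_infinite _ (h _ hpos)
    obtain ⟨j, hj1, hj2⟩ := hinf.exists_gt m
    refine ⟨j, hj2, ?_⟩
    simpa [Set.mem_compl_iff, not_le] using hj1
  choose F hF1 hF2 using key
  set n : ℕ → ℕ := fun k => Nat.rec (F 0 0) (fun k ih => F (k+1) ih) k with hn
  have hmono : StrictMono n := strictMono_nat_of_lt_succ (fun k => hF1 (k+1) (n k))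
  refine ⟨n, hmono, ?_⟩
  have hsmall : ∀ k, S (x (n k)) (x (n k)) l < 1/(k+1) := by
    intro k
    cases k with
    | zero => exact hF2 0 0
    | succ k => exact hF2 (k+1) (n k)
  intro ε hε
  obtain ⟨N, hN⟩ := exists_nat_one_div_lt hε
  refine ⟨N, fun k hk => ?_⟩
  have h1 : (1:ℝ)/(k+1) ≤ 1/(N+1) := by
    apply one_div_le_one_div_of_le (by positivity)
    exact_mod_cast Nat.succ_le_succ hk
  calc S (x (n k)) (x (n k)) l < 1/(k+1) := hsmall k
    _ ≤ 1/(N+1) := h1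
    _ < ε := hN
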